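/- arXiv:2001.00979 — 6 statements merged into one kernel-verified Lean document; each statement's English description precedes it below -/
import Mathlib

section
/- Let W, ΔS, γ, T_h, T_c be positive reals with T_h > T_c. The function P(t1, t3) = ((T_h - T_c)·ΔS)/(t1 + t3) - (γ·W²)·(1/t1 + 1/t3)/(t1 + t3), defined for t1, t3 > 0, attains its maximum at t1 = t3 = 4γW²/((T_h - T_c)·ΔS). -/
/-- The power of a finite-time Carnot-like cycle as a function of the isothermal
phase durations `t1, t3` attains its maximum at `t1 = t3 = 4γW²/((T_h - T_c)·ΔS)`. -/
theorem power_max_time_schedule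
    (W ΔS γ Th Tc : ℝ) (hW : 0 < W) (hS : 0 < ΔS) (hγ : 0 < γ)
    (hTc : 0 < Tc) (hT : Tc < Th)
    (P : ℝ → ℝ → ℝ)
    (hP : ∀ t1 t3, P t1 t3 =
      ((Th - Tc) * ΔS) / (t1 + t3) - (γ * W ^ 2) * (1 / t1 + 1 / t3) / (t1 + t3)) :
    ∀ t1 t3, 0 < t1 → 0 < t3 →
      P t1 t3 ≤ P (4 * γ * W ^ 2 / ((Th - Tc) * ΔS)) (4 * γ * W ^ 2 / ((Th - Tc) * ΔS)) := by
  intro t1 t3 h1 h3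
  have hA : 0 < (Th - Tc) * ΔS := mul_pos (by linarith) hS
  set A := (Th - Tc) * ΔS with hAdef
  set c := γ * W ^ 2 with hcdef
  have hc : 0 < c := by positivity
  have ht : 0 < 4 * γ * W ^ 2 / A := by positivity
  rw [hP, hP]
  have hrhs : A / (4 * γ * W ^ 2 / A + 4 * γ * W ^ 2 / A)
      - c * (1 / (4 * γ * W ^ 2 / A) + 1 / (4 * γ * W ^ 2 / A))
        / (4 * γ * W ^ 2 / A + 4 * γ * W ^ 2 / A) = A ^ 2 / (16 * c) := by
    rw [hcdef]
    field_simp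
    ring
  rw [hrhs]
  have hs : 0 < t1 + t3 := by linarith
  have hlhs : A / (t1 + t3) - c * (1 / t1 + 1 / t3) / (t1 + t3)
      = A / (t1 + t3) - c / (t1 * t3) := by
    field_simp
    ring
  rw [hlhs]
  rw [div_sub_div _ _ hs.ne' (by positivity : (t1 * t3 : ℝ) ≠ 0),
    div_le_div_iff₀ (by positivity) (by positivity)]
  nlinarith [mul_nonneg (mul_pos h1 h3).le (sq_nonneg (A * (t1 + t3) - 8 * c)),
    mul_nonneg (sq_nonneg (t1 - t3)) (sq_nonneg c), mul_pos h1 h3, hs, hc,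
    mul_pos (mul_pos h1 h3) hs]
end

section
/- Let T_h > T_c > 0, γ > 0, ΔS > 0, W > 0. Setting t1 = t3 = 4γW²/((T_h - T_c)·ΔS), the efficiency η = [(T_h - T_c)ΔS - γ(1/t1 + 1/t3)W²] / [T_h·ΔS - (γ/t1)W²] equals 2(T_h - T_c)/(3T_h + T_c), which equals η_C/(2 - η_C/2) where η_C = 1 - T_c/T_h. -/
/-- Efficiency at maximum power equals `2(T_h - T_c)/(3T_h + T_c) = η_C/(2 - η_C/2)`. -/
theorem efficiency_at_max_power
    (W ΔS γ Th Tc t1 t3 η ηC : ℝ) (hW : 0 < W) (hS : 0 < ΔS) (hγ : 0 < γ)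
    (hTc : 0 < Tc) (hT : Tc < Th)
    (ht1 : t1 = 4 * γ * W ^ 2 / ((Th - Tc) * ΔS))
    (ht3 : t3 = 4 * γ * W ^ 2 / ((Th - Tc) * ΔS))
    (hη : η = ((Th - Tc) * ΔS - γ * (1 / t1 + 1 / t3) * W ^ 2) /
      (Th * ΔS - (γ / t1) * W ^ 2))
    (hηC : ηC = 1 - Tc / Th) :
    η = 2 * (Th - Tc) / (3 * Th + Tc) ∧ η = ηC / (2 - ηC / 2) := by
  have hd : Th - Tc > 0 := by linarith
  have hW2 : (0:ℝ) < W ^ 2 := by positivity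
  have hden : (Th - Tc) * ΔS ≠ 0 := ne_of_gt (mul_pos hd hS)
  have ht1pos : 0 < t1 := by rw [ht1]; exact div_pos (by positivity) (mul_pos hd hS)
  have h1 : γ / t1 * W ^ 2 = (Th - Tc) * ΔS / 4 := by
    rw [ht1]; field_simp
  have h2 : γ * (1 / t1 + 1 / t3) * W ^ 2 = (Th - Tc) * ΔS / 2 := by
    rw [ht1, ht3]; field_simp; ring
  have key : η = 2 * (Th - Tc) / (3 * Th + Tc) := by
    rw [hη, h1, h2]
    have h3 : (0:ℝ) < 3 * Th + Tc := by linarith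
    have hden2 : Th * ΔS - (Th - Tc) * ΔS / 4 ≠ 0 := by
      have : Th * ΔS - (Th - Tc) * ΔS / 4 = (3 * Th + Tc) * ΔS / 4 := by ring
      rw [this]; exact ne_of_gt (by positivity)
    rw [div_eq_div_iff hden2 (ne_of_gt h3)]
    ring
  refine ⟨key, ?_⟩
  rw [key, hηC]
  have hThp : (0:ℝ) < Th := lt_trans hTc hT
  have hTh : Th ≠ 0 := ne_of_gt hThp
  have h3 : (3:ℝ) * Th + Tc ≠ 0 := ne_of_gt (by linarith)
  have h4 : 2 - (1 - Tc / Th) / 2 ≠ 0 := by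
    have : 2 - (1 - Tc / Th) / 2 = (3 * Th + Tc) / (2 * Th) := by field_simp; ring
    rw [this]
    exact ne_of_gt (div_pos (by linarith) (by linarith))
  rw [div_eq_div_iff h3 h4]
  field_simp
  ring
end

section
/- Let k_B, γ, t, T_h, T_c, I > 0 with T_h > T_c. For any real numbers ΔS and W ≥ 0 satisfying ΔS ≤ k_B · W · √I, the quantity P = (T_h - T_c)·ΔS/t - 4γW²/t² satisfies P ≤ k_B²(T_h - T_c)²·I/(16γ). -/
/-- Fisher-information power bound: if `ΔS ≤ k_B W √I` (HWI inequality), then the power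
`P = (T_h - T_c)ΔS/t - 4γW²/t²` is at most `k_B²(T_h - T_c)²I/(16γ)`. -/
theorem power_bound_fisher
    (kB γ t Th Tc I ΔS W P : ℝ) (hkB : 0 < kB) (hγ : 0 < γ) (ht : 0 < t)
    (hTc : 0 < Tc) (hT : Tc < Th) (hI : 0 < I) (hW : 0 ≤ W)
    (hHWI : ΔS ≤ kB * W * Real.sqrt I)
    (hP : P = (Th - Tc) * ΔS / t - 4 * γ * W ^ 2 / t ^ 2) :
    P ≤ kB ^ 2 * (Th - Tc) ^ 2 * I / (16 * γ) := by
  have hs : Real.sqrt I ^ 2 = I := Real.sq_sqrt hI.le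
  have hs0 : 0 ≤ Real.sqrt I := Real.sqrt_nonneg I
  have h1 : P ≤ (Th - Tc) * (kB * W * Real.sqrt I) / t - 4 * γ * W ^ 2 / t ^ 2 := by
    rw [hP]
    have := sub_lt_sub_right hT Tc
    gcongr
  rw [div_sub_div _ _ (ne_of_gt ht) (ne_of_gt (pow_pos ht 2)), le_div_iff₀ (by positivity)] at h1
  rw [le_div_iff₀ (by positivity)]
  have h2 : P * t ^ 2 ≤ (Th - Tc) * (kB * W * Real.sqrt I) * t - 4 * γ * W ^ 2 := by
    have := mul_pos ht (mul_pos ht ht)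
    nlinarith [h1]
  have h3 : P * (16 * γ) * t ^ 2 ≤ kB ^ 2 * (Th - Tc) ^ 2 * (Real.sqrt I ^ 2) * t ^ 2 := by
    nlinarith [sq_nonneg (kB * (Th - Tc) * Real.sqrt I * t - 8 * γ * W), mul_le_mul_of_nonneg_left h2 (by positivity : (0:ℝ) ≤ 16 * γ)]
  rw [hs] at h3
  exact le_of_mul_le_mul_right h3 (by positivity)
end

section
/- Let T_h > T_c > 0, k_B > 0, M > 0, γ > 0. The maximum of P(λ, σ) = k_B(T_h - T_c)·λ/2 - γλ²σ² over all λ ≥ 0 and σ ≥ k_B T_c/√(γM) satisfying γλ + k_B T_c/σ² ≤ √(γM)/σ equals (M/8)·((T_h - T_c)²)/(T_c(T_c + T_h)) = (M/8)·(T_h/T_c - 1)·(T_h/T_c - 1)/(T_h/T_c + 1). -/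
/-- The constrained maximum of `P(λ,σ) = k_B(T_h-T_c)λ/2 - γλ²σ²` over `λ ≥ 0`,
`σ ≥ k_B T_c/√(γM)` with `γλ + k_B T_c/σ² ≤ √(γM)/σ` equals
`(M/8)(T_h-T_c)²/(T_c(T_c+T_h)) = (M/8)(T_h/T_c - 1)(T_h/T_c - 1)/(T_h/T_c + 1)`. -/
theorem constrained_power_max
    (Th Tc kB M γ : ℝ) (hTc : 0 < Tc) (hT : Tc < Th) (hkB : 0 < kB)
    (hM : 0 < M) (hγ : 0 < γ) :
    IsGreatest
      {p : ℝ | ∃ lam σ : ℝ, 0 ≤ lam ∧ kB * Tc / Real.sqrt (γ * M) ≤ σ ∧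
        γ * lam + kB * Tc / σ ^ 2 ≤ Real.sqrt (γ * M) / σ ∧
        p = kB * (Th - Tc) * lam / 2 - γ * lam ^ 2 * σ ^ 2}
      ((M / 8) * (Th - Tc) ^ 2 / (Tc * (Tc + Th))) ∧
    (M / 8) * (Th - Tc) ^ 2 / (Tc * (Tc + Th)) =
      (M / 8) * (Th / Tc - 1) * ((Th / Tc - 1) / (Th / Tc + 1)) := by
  have hγM : 0 < γ * M := mul_pos hγ hM
  set s := Real.sqrt (γ * M) with hs_def
  have hs : 0 < s := Real.sqrt_pos.mpr hγM
  have hs2 : s ^ 2 = γ * M := Real.sq_sqrt hγM.le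
  have hMeq : M = s ^ 2 / γ := by field_simp [hs2]; linear_combination -hs2
  have hTh : 0 < Th := hTc.trans hT
  have hTpT : 0 < Tc + Th := by linarith
  have hT3 : 0 < Th + 3 * Tc := by linarith
  have hΔ : 0 < Th - Tc := by linarith
  refine ⟨⟨?_, ?_⟩, ?_⟩
  · -- membership: the witness point
    refine ⟨M / (kB * Tc) * ((Th + 3 * Tc) * (Th - Tc) / (4 * (Tc + Th) ^ 2)),
      kB * Tc / s * (2 * (Tc + Th) / (Th + 3 * Tc)), ?_, ?_, ?_, ?_⟩
    · positivity
    · have h1 : (1 : ℝ) ≤ 2 * (Tc + Th) / (Th + 3 * Tc) := by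
        rw [le_div_iff₀ hT3]; linarith
      calc kB * Tc / s = kB * Tc / s * 1 := by ring
        _ ≤ _ := by
          apply mul_le_mul_of_nonneg_left h1
          positivity
    · -- constraint holds with equality
      apply le_of_eq
      rw [hMeq]
      field_simp
      ring
    · -- value
      rw [hMeq]
      field_simp
      ring
  · -- upper bound
    rintro p ⟨a, σ, ha, hσl, hcon, hp⟩
    have hσ : 0 < σ := lt_of_lt_of_le (by positivity) hσl
    have hσ2 : (0:ℝ) < σ ^ 2 := by positivity
    -- clear denominators in the constraint
    have h1 : γ * a * σ ^ 2 + kB * Tc ≤ s * σ := by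
      have h := mul_le_mul_of_nonneg_right hcon hσ2.le
      rw [add_mul, div_mul_cancel₀ _ (ne_of_gt hσ2)] at h
      have h2 : s / σ * σ ^ 2 = s * σ := by field_simp
      linarith [h2 ▸ h]
    have hyn : 0 ≤ γ * a * σ ^ 2 + kB * Tc := by positivity
    have h2 : (γ * a * σ ^ 2 + kB * Tc) ^ 2 ≤ γ * M * σ ^ 2 := by
      calc (γ * a * σ ^ 2 + kB * Tc) ^ 2 ≤ (s * σ) ^ 2 := by
            apply sq_le_sq' (by nlinarith) h1
        _ = γ * M * σ ^ 2 := by rw [mul_pow, hs2]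
    have hγσ : 0 < γ * σ ^ 2 := by positivity
    -- key inequality multiplied through by γσ²
    have key : (kB * (Th - Tc) * a / 2 - γ * a ^ 2 * σ ^ 2) * (Tc * (Tc + Th)) *
        (γ * σ ^ 2) ≤ (M / 8 * (Th - Tc) ^ 2) * (γ * σ ^ 2) := by
      nlinarith [sq_nonneg ((Th + 3 * Tc) * (γ * a * σ ^ 2) - kB * Tc * (Th - Tc)),
        mul_le_mul_of_nonneg_left h2 (sq_nonneg (Th - Tc)), sq_nonneg (Th - Tc)]
    have key' := le_of_mul_le_mul_right key hγσ
    rw [hp, le_div_iff₀ (by positivity : (0:ℝ) < Tc * (Tc + Th))]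
    linarith [key']
  · field_simp
    ring
end

section
/- Let ΔT, T_C > 0. Define f(x, y) = (ΔT/(2T_C))·x - x²/y² and g(y) = y - y². Then max over {(x, y) : 0 ≤ x ≤ g(y), 0 < y ≤ 1} of f(x, y) equals ΔT²/(8·T_C·(T_C + T_H)) where T_H = T_C + ΔT. Moreover the unconstrained maximizer x*(y) = (ΔT/(4T_C))·y² satisfies x*(y) ≤ g(y) if and only if y ≤ y_0 := 1/(1 + ΔT/(4T_C)). -/
/-- Dimensionless optimization in the lower power bound: the constrained maximum of
`f(x,y) = (ΔT/(2T_C))x - x²/y²` over `0 ≤ x ≤ y - y²`, `0 < y ≤ 1` equals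
`ΔT²/(8T_C(T_C+T_H))` with `T_H = T_C + ΔT`; the unconstrained maximizer
`x*(y) = (ΔT/(4T_C))y²` is feasible iff `y ≤ 1/(1 + ΔT/(4T_C))`. -/
theorem dimensionless_power_max
    (ΔT TC TH : ℝ) (hΔT : 0 < ΔT) (hTC : 0 < TC) (hTH : TH = TC + ΔT) :
    IsGreatest
      {p : ℝ | ∃ x y : ℝ, 0 ≤ x ∧ x ≤ y - y ^ 2 ∧ 0 < y ∧ y ≤ 1 ∧
        p = (ΔT / (2 * TC)) * x - x ^ 2 / y ^ 2}
      (ΔT ^ 2 / (8 * TC * (TC + TH))) ∧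
    (∀ y : ℝ, 0 < y → y ≤ 1 →
      ((ΔT / (4 * TC)) * y ^ 2 ≤ y - y ^ 2 ↔ y ≤ 1 / (1 + ΔT / (4 * TC)))) := by
  set a : ℝ := ΔT / (4 * TC) with ha_def
  have ha : 0 < a := div_pos hΔT (by linarith)
  have hΔeq : ΔT = 4 * TC * a := by rw [ha_def]; field_simp
  have hM : ΔT ^ 2 / (8 * TC * (TC + TH)) = a ^ 2 / (1 + 2 * a) := by
    rw [hTH, hΔeq]
    have h1 : (0:ℝ) < 1 + 2 * a := by linarith
    field_simp
    ring
  have hr : ΔT / (2 * TC) = 2 * a := by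
    rw [hΔeq]; field_simp; ring
  constructor
  · rw [hM]
    constructor
    · -- membership: witness y = (a+1)/(2a+1), x = y - y²
      refine ⟨a * (a + 1) / (2 * a + 1) ^ 2, (a + 1) / (2 * a + 1), ?_, ?_, ?_, ?_, ?_⟩
      · positivity
      · apply le_of_eq
        field_simp
        ring
      · positivity
      · rw [div_le_one (by linarith)]; linarith
      · rw [hr]
        have h1 : ((a + 1) / (2 * a + 1)) ^ 2 ≠ 0 := by positivity
        field_simp
        ring
    · rintro p ⟨x, y, hx, hxy, hy, hy1, rfl⟩
      rw [hr]
      have hy2 : (0:ℝ) < y ^ 2 := by positivity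
      have hE : 2 * a * x - x ^ 2 / y ^ 2 = (2 * a * x * y ^ 2 - x ^ 2) / y ^ 2 := by
        field_simp
      rw [hE, div_le_div_iff₀ hy2 (by linarith)]
      rcases le_or_gt (y * (1 + a)) 1 with hc | hc
      · have hsq : (y * (1 + a)) ^ 2 ≤ 1 := by nlinarith [mul_pos hy (by linarith : (0:ℝ) < 1 + a)]
        nlinarith [mul_nonneg (by linarith : (0:ℝ) ≤ 1 + 2*a) (sq_nonneg (x - a * y ^ 2)),
          mul_nonneg (sq_nonneg (a*y)) (sub_nonneg.2 hsq), sq_nonneg (a^2*y^2)]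
      · have hg : a * y ^ 2 - (y - y ^ 2) ≥ 0 := by nlinarith
        nlinarith [mul_nonneg (sub_nonneg.2 hxy) (by nlinarith : 2*a*y^2 - (y - y^2) - x ≥ 0),
          mul_nonneg (sq_nonneg ((2*a+1)*(1-y) - a)) hy2.le]
  · intro y hy hy1
    have h1 : (0:ℝ) < 1 + a := by linarith
    rw [le_div_iff₀ h1]
    constructor
    · intro h; nlinarith
    · intro h; nlinarith [mul_pos hy hy]
end

section
/- Let T_h > T_c > 0. Then η_SS ≤ η_CA ≤ η ≤ η_C, where η_SS = 2(T_h - T_c)/(3T_h + T_c), η_CA = 1 - √(T_c/T_h), η = (T_h - T_c)/(T_h + T_c), and η_C = 1 - T_c/T_h. -/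
/-- Ordering of efficiencies: `η_SS ≤ η_CA ≤ η ≤ η_C`. -/
theorem efficiency_chain
    (Th Tc ηSS ηCA η ηC : ℝ) (hTc : 0 < Tc) (hT : Tc < Th)
    (hSS : ηSS = 2 * (Th - Tc) / (3 * Th + Tc))
    (hCA : ηCA = 1 - Real.sqrt (Tc / Th))
    (hη : η = (Th - Tc) / (Th + Tc))
    (hC : ηC = 1 - Tc / Th) :
    ηSS ≤ ηCA ∧ ηCA ≤ η ∧ η ≤ ηC := by
  have hTh : 0 < Th := hTc.trans hT
  set s := Real.sqrt (Tc / Th) with hs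
  have hs2 : s ^ 2 = Tc / Th := Real.sq_sqrt (by positivity)
  have hs0 : 0 < s := Real.sqrt_pos.mpr (by positivity)
  have hs1 : s < 1 := by
    rw [hs, show (1:ℝ) = Real.sqrt 1 by simp]
    exact Real.sqrt_lt_sqrt (by positivity) (by rw [div_lt_one hTh]; exact hT)
  have hTcs : Tc = s ^ 2 * Th := by field_simp at hs2; linarith [hs2]
  subst hSS hCA hη hC
  refine ⟨?_, ?_, ?_⟩
  · rw [div_le_iff₀ (by nlinarith)]
    nlinarith [mul_nonneg (mul_nonneg hTh.le (sub_nonneg.mpr hs1.le)) (sq_nonneg (1 - s))]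
  · rw [le_div_iff₀ (by nlinarith)]
    nlinarith [mul_pos hTh (mul_pos hs0 (sub_pos.mpr hs1))]
  · rw [div_le_iff₀ (by nlinarith)]
    nlinarith [mul_pos hTh hTc, sq_nonneg (Th - Tc)]
end
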